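/- The phase-retrieval proximal operator: for c ≥ 0, t > 0, and nonzero z ∈ ℂ, the complex number x* = ((t/(1+t))|z| + (1/(1+t))c)·(z/|z|) minimizes x ↦ (1/2)(|x| − c)² + (t/2)|x − z|². -/

import Mathlib

/-- the phase-retrieval proximal operator absProj minimizes the objective. -/
theorem absProj_minimizes (c t : ℝ) (hc : 0 ≤ c) (ht : 0 < t) (z : ℂ) (hz : z ≠ 0) :
    let f : ℂ → ℝ := fun x =>
      (1 / 2) * (‖x‖ - c) ^ 2 + (t / 2) * ‖x - z‖ ^ 2
    let xstar : ℂ :=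
      (((t / (1 + t)) * ‖z‖ + (1 / (1 + t)) * c : ℝ) : ℂ) *
        (z / (‖z‖ : ℂ))
    ∀ x : ℂ, f xstar ≤ f x := by
  intro f xstar x
  set a : ℝ := ‖z‖ with ha
  have haz : 0 < a := norm_pos_iff.mpr hz
  have ht1 : (0:ℝ) < 1 + t := by linarith
  have hphase : ‖z / (a : ℂ)‖ = 1 := by
    rw [norm_div, Complex.norm_real, Real.norm_of_nonneg haz.le, ← ha, div_self haz.ne']
  set r : ℝ := (t / (1 + t)) * a + (1 / (1 + t)) * c with hrdef
  have hr0 : 0 ≤ r := by positivity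
  have hreq : (1 + t) * r = t * a + c := by
    rw [hrdef]; field_simp
  have hxs : ‖xstar‖ = r := by
    show ‖(r : ℂ) * (z / (a : ℂ))‖ = r
    rw [norm_mul, hphase, Complex.norm_real, mul_one, Real.norm_of_nonneg hr0]
  have hca : (a : ℂ) ≠ 0 := by exact_mod_cast haz.ne'
  have hz_eq : z = (a : ℂ) * (z / (a : ℂ)) := by
    rw [mul_comm, div_mul_cancel₀ z hca]
  have hxsz : ‖xstar - z‖ = |r - a| := by
    have hsub : xstar - z = ((r - a : ℝ) : ℂ) * (z / (a : ℂ)) := by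
      show (r : ℂ) * (z / (a : ℂ)) - z = _
      push_cast
      rw [sub_mul, ← hz_eq]
    rw [hsub, norm_mul, hphase, Complex.norm_real, mul_one, Real.norm_eq_abs]
  set s : ℝ := ‖x‖ with hs
  have hkey : |s - a| ≤ ‖x - z‖ :=
    abs_norm_sub_norm_le x z
  have hkey2 : (s - a) ^ 2 ≤ ‖x - z‖ ^ 2 := by
    calc (s - a) ^ 2 = |s - a| ^ 2 := (sq_abs _).symm
    _ ≤ ‖x - z‖ ^ 2 := by
        exact pow_le_pow_left₀ (abs_nonneg _) hkey 2
  show (1 / 2) * (‖xstar‖ - c) ^ 2 + (t / 2) * ‖xstar - z‖ ^ 2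
      ≤ (1 / 2) * (s - c) ^ 2 + (t / 2) * ‖x - z‖ ^ 2
  rw [hxs, hxsz, sq_abs]
  have key : 1/2*(s-c)^2 + t/2*(s-a)^2 - (1/2*(r-c)^2 + t/2*(r-a)^2)
      = (1+t)/2*(s-r)^2 := by
    linear_combination (s - r) * hreq
  have h2 : t/2*(s-a)^2 ≤ t/2*‖x-z‖^2 :=
    mul_le_mul_of_nonneg_left hkey2 (by positivity)
  have h3 : (0:ℝ) ≤ (1+t)/2*(s-r)^2 := by positivity
  linarith
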